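/- The function G is strictly concave on (0, ∞), and G(ξ) tends to 0 as ξ → 0 from the right (so extending G by G(0) = 0 yields a continuous concave function on [0, ∞)). -/

import Mathlib

open Real Filter

noncomputable def Gfun (μ Δ : ℝ) (ξ : ℝ) : ℝ :=
  (μ / Δ) * ξ * (1 - Real.exp (-(Δ / ξ)))

lemma hasDerivAt_g (Δ : ℝ) {x : ℝ} (hx : x ≠ 0) :
    HasDerivAt (fun ξ : ℝ => Real.exp (-(Δ / ξ))) (Real.exp (-(Δ / x)) * (Δ / x ^ 2)) x := by
  have h1 : HasDerivAt (fun ξ : ℝ => -(Δ / ξ)) (Δ / x ^ 2) x := by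
    simp only [div_eq_mul_inv]
    refine ((hasDerivAt_inv hx).const_mul Δ).neg.congr_deriv ?_
    ring
  exact h1.exp

lemma hasDerivAt_G (μ Δ : ℝ) (hΔ : Δ ≠ 0) {x : ℝ} (hx : 0 < x) :
    HasDerivAt (Gfun μ Δ)
      ((μ / Δ) * (1 - Real.exp (-(Δ / x)) * (1 + Δ / x))) x := by
  have hg := hasDerivAt_g Δ hx.ne'
  have h1 : HasDerivAt (fun ξ : ℝ => (μ / Δ) * ξ) (μ / Δ) x := by
    simpa using (hasDerivAt_id x).const_mul (μ / Δ)
  have h2 := (hasDerivAt_const x (1:ℝ)).sub hg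
  have := h1.mul h2
  refine this.congr_deriv ?_
  simp only [Pi.sub_apply]
  set E := Real.exp (-(Δ / x)) with hE
  field_simp [hx.ne', hΔ]
  ring

lemma hasDerivAt_G1 (μ Δ : ℝ) (hΔ : Δ ≠ 0) {x : ℝ} (hx : 0 < x) :
    HasDerivAt (fun ξ : ℝ => (μ / Δ) * (1 - Real.exp (-(Δ / ξ)) * (1 + Δ / ξ)))
      ((μ / Δ) * (-(Δ ^ 2 / x ^ 3) * Real.exp (-(Δ / x)))) x := by
  have hg := hasDerivAt_g Δ hx.ne'
  have h3 : HasDerivAt (fun ξ : ℝ => 1 + Δ / ξ) (-(Δ / x ^ 2)) x := by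
    simp only [div_eq_mul_inv]
    refine (((hasDerivAt_inv hx.ne').const_mul Δ).const_add 1).congr_deriv ?_
    ring
  have := (((hasDerivAt_const x (1:ℝ)).sub (hg.mul h3)).const_mul (μ / Δ))
  refine this.congr_deriv ?_
  set E := Real.exp (-(Δ / x)) with hE
  field_simp [hx.ne', hΔ]
  ring

theorem stmt_17 (μ Δ : ℝ) (hμ : 0 < μ) (hΔ : 0 < Δ) :
    StrictConcaveOn ℝ (Set.Ioi (0 : ℝ)) (Gfun μ Δ) ∧
    Filter.Tendsto (Gfun μ Δ) (nhdsWithin 0 (Set.Ioi 0)) (nhds 0) := by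
  have hc : 0 < μ / Δ := div_pos hμ hΔ
  constructor
  · apply strictConcaveOn_of_deriv2_neg (convex_Ioi 0)
    · intro x hx
      exact ((hasDerivAt_G μ Δ hΔ.ne' hx).continuousAt).continuousWithinAt
    · intro x hx
      rw [interior_Ioi] at hx
      have hderiv : Set.EqOn (deriv (Gfun μ Δ))
          (fun ξ : ℝ => (μ / Δ) * (1 - Real.exp (-(Δ / ξ)) * (1 + Δ / ξ))) (Set.Ioi 0) := by
        intro y hy
        exact (hasDerivAt_G μ Δ hΔ.ne' hy).deriv
      have heq : deriv (deriv (Gfun μ Δ)) x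
          = deriv (fun ξ : ℝ => (μ / Δ) * (1 - Real.exp (-(Δ / ξ)) * (1 + Δ / ξ))) x := by
        apply Filter.EventuallyEq.deriv_eq
        exact Filter.eventuallyEq_of_mem (isOpen_Ioi.mem_nhds hx) hderiv
      simp only [Function.iterate_succ, Function.iterate_zero, Function.comp_apply, id]
      rw [heq, (hasDerivAt_G1 μ Δ hΔ.ne' hx).deriv]
      have hx0 : (0:ℝ) < x := hx
      have hpos : 0 < (μ / Δ) * ((Δ ^ 2 / x ^ 3) * Real.exp (-(Δ / x))) := by positivity
      nlinarith
  · have hb : ∀ᶠ ξ in nhdsWithin (0:ℝ) (Set.Ioi 0),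
        Gfun μ Δ ξ ∈ Set.Icc 0 ((μ / Δ) * ξ) := by
      filter_upwards [self_mem_nhdsWithin] with ξ hξ
      have hξ0 : (0:ℝ) < ξ := hξ
      have hexp : Real.exp (-(Δ / ξ)) ≤ 1 := by
        have h0 : 0 < Δ / ξ := div_pos hΔ hξ0
        calc Real.exp (-(Δ / ξ)) ≤ Real.exp 0 := Real.exp_le_exp.mpr (by linarith)
          _ = 1 := Real.exp_zero
      have hexp0 : 0 < Real.exp (-(Δ / ξ)) := Real.exp_pos _
      constructor
      · apply mul_nonneg (mul_nonneg hc.le hξ0.le); linarith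
      · unfold Gfun
        nlinarith [mul_pos hc hξ0]
    have hcont : Continuous (fun ξ : ℝ => (μ / Δ) * ξ) := by fun_prop
    have h1 : Filter.Tendsto (fun ξ : ℝ => (μ / Δ) * ξ) (nhdsWithin 0 (Set.Ioi 0)) (nhds 0) :=
      (hcont.tendsto' 0 0 (by simp)).mono_left nhdsWithin_le_nhds
    apply tendsto_of_tendsto_of_tendsto_of_le_of_le' tendsto_const_nhds h1
    · filter_upwards [hb] with ξ h using h.1
    · filter_upwards [hb] with ξ h using h.2
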